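/- For every integer r ≥ 0 and n = 3^(2^r) + 1, there exists a 3-laminar family of subsets of [n] of cardinality at least 1 + binom(n,1) + binom(n,2) + binom(n,3) · (1 + Σ_{i=0}^{r} 1/binom(3^(2^i) + 1, 3)). -/

import Mathlib

/-!
We construct, for `n = 3^(2^r) + 1`, a large `3`-laminar family on `[n]`,
proving the recursive lower bound of the theorem below.  The key ingredient
is the existence of inversive planes (Steiner systems `S(3, q+1, q^2+1)`)
for `q = 3^(2^i)`, built from the projective line over a quadratic extension
of a finite field, and used recursively inside blocks.
-/

set_option linter.unusedSectionVars false
set_option maxHeartbeats 1000000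

namespace ThreeLaminar

open Polynomial

/-- cross product of two vectors in `R²` -/
def cross {R : Type*} [Field R] (x y : R × R) : R := x.1 * y.2 - x.2 * y.1

/-- 2-dimensional Cramer identity. -/
lemma cramer {R : Type*} [Field R] (x y z : R × R) :
    cross x y • z = cross z y • x + cross x z • y := by
  refine Prod.ext ?_ ?_ <;>
    simp only [Prod.smul_fst, Prod.smul_snd, Prod.fst_add, Prod.snd_add,
      smul_eq_mul, cross] <;> ring

section Geometry

variable {K F : Type*} [Field K] [Field F] [DecidableEq F]

lemma ne_zero_pair {x : F × F} : x ≠ 0 ↔ x.1 ≠ 0 ∨ x.2 ≠ 0 := by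
  constructor
  · intro h; by_contra hc; push_neg at hc
    exact h (Prod.ext hc.1 hc.2)
  · rintro (h | h) hc <;> rw [hc] at h <;> simp at h

/-- the point of `P¹(F)` (as `Option F`) determined by a nonzero vector -/
def pt (x : F × F) : Option F := if x.2 = 0 then none else some (x.1 / x.2)

lemma pt_eq_iff {x y : F × F} (hx : x ≠ 0) (hy : y ≠ 0) :
    pt x = pt y ↔ cross x y = 0 := by
  unfold pt cross
  by_cases h2 : x.2 = 0 <;> by_cases h4 : y.2 = 0
  · simp [h2, h4]
  · have hx1 : x.1 ≠ 0 := by rcases ne_zero_pair.1 hx with h | h <;> tauto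
    simp [h2, h4, hx1]
  · have hy1 : y.1 ≠ 0 := by rcases ne_zero_pair.1 hy with h | h <;> tauto
    simp [h2, h4, hy1]
  · rw [if_neg h2, if_neg h4]
    simp only [Option.some.injEq]
    rw [div_eq_div_iff h2 h4, sub_eq_zero, mul_comm x.2 y.1]

lemma exists_smul_of_cross_eq_zero {x y : F × F} (hx : x ≠ 0)
    (h : cross x y = 0) : ∃ c : F, y = c • x := by
  unfold cross at h
  rcases ne_zero_pair.1 hx with h1 | h1
  · refine ⟨y.1 / x.1, Prod.ext (by show y.1 = y.1 / x.1 * x.1; rw [div_mul_cancel₀ _ h1]) ?_⟩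
    show y.2 = y.1 / x.1 * x.2
    rw [div_mul_eq_mul_div, eq_div_iff h1]
    linear_combination h
  · refine ⟨y.2 / x.2, Prod.ext ?_ (by show y.2 = y.2 / x.2 * x.2; rw [div_mul_cancel₀ _ h1])⟩
    show y.1 = y.2 / x.2 * x.1
    rw [div_mul_eq_mul_div, eq_div_iff h1]
    linear_combination -h

lemma pt_smul {c : F} (hc : c ≠ 0) {x : F × F} (hx : x ≠ 0) :
    pt (c • x) = pt x := by
  rw [pt_eq_iff (by simp [smul_eq_zero, hc, hx]) hx]
  show (c • x).1 * x.2 - (c • x).2 * x.1 = 0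
  simp only [Prod.smul_fst, Prod.smul_snd, smul_eq_mul]; ring


variable (φ : K →+* F) [Fintype K]


/-- the `K`-combination of `u, v` with coefficient vector `k`. -/
def combo (u v : F × F) (k : K × K) : F × F :=
  (φ k.1 * u.1 + φ k.2 * v.1, φ k.1 * u.2 + φ k.2 * v.2)

lemma cross_combo (u v : F × F) (k l : K × K) :
    cross (combo φ u v k) (combo φ u v l) = φ (cross k l) * cross u v := by
  simp only [cross, combo, map_sub, map_mul]; ring

lemma combo_smul_add (u v : F × F) (s t : K) (k l : K × K) :
    combo φ u v (s • k + t • l) = φ s • combo φ u v k + φ t • combo φ u v l := by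
  refine Prod.ext ?_ ?_ <;>
    simp only [combo, Prod.smul_fst, Prod.smul_snd, Prod.fst_add, Prod.snd_add,
      smul_eq_mul, map_add, map_mul] <;> ring

lemma combo_ne_zero {u v : F × F} (huv : cross u v ≠ 0) {k : K × K} (hk : k ≠ 0) :
    combo φ u v k ≠ 0 := by
  intro h0
  have c1 : cross (combo φ u v k) v = φ k.1 * cross u v := by
    simp only [cross, combo]; ring
  have c2 : cross u (combo φ u v k) = φ k.2 * cross u v := by
    simp only [cross, combo]; ring
  rw [h0] at c1 c2
  simp only [cross, Prod.fst_zero, Prod.snd_zero, zero_mul, mul_zero, sub_zero,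
    zero_sub, sub_self] at c1 c2
  have h1 : φ k.1 = 0 ∨ cross u v = 0 := mul_eq_zero.1 (by simp only [cross]; linear_combination -c1)
  have h2 : φ k.2 = 0 ∨ cross u v = 0 := mul_eq_zero.1 (by simp only [cross]; linear_combination -c2)
  have hk1 : k.1 = 0 := by
    rcases h1 with h | h
    · exact (_root_.map_eq_zero φ).1 h
    · exact absurd h huv
  have hk2 : k.2 = 0 := by
    rcases h2 with h | h
    · exact (_root_.map_eq_zero φ).1 h
    · exact absurd h huv
  exact hk (Prod.ext hk1 hk2)

/-- normalized coefficient vectors: a transversal of the lines of `K²`. -/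
def sigma : Option K → K × K := fun o => o.elim (1, 0) (fun t => (t, 1))

lemma sigma_ne_zero (o : Option K) : sigma o ≠ (0 : K × K) := by
  cases o <;> simp [sigma, Prod.ext_iff]

lemma cross_sigma_eq_zero_iff (o o' : Option K) :
    cross (sigma o) (sigma o') = 0 ↔ o = o' := by
  cases o <;> cases o' <;> simp [sigma, cross, sub_eq_zero]


def block (u v : F × F) : Finset (Option F) :=
  Finset.image (fun o : Option K => pt (combo φ u v (sigma o))) Finset.univ

lemma mem_block_of {u v : F × F} (huv : cross u v ≠ 0) {k : K × K} (hk : k ≠ 0) :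
    pt (combo φ u v k) ∈ block φ u v := by
  rcases em (k.2 = 0) with h2 | h2
  · refine Finset.mem_image.2 ⟨none, Finset.mem_univ _, ?_⟩
    rw [pt_eq_iff (combo_ne_zero φ huv (sigma_ne_zero none)) (combo_ne_zero φ huv hk),
      cross_combo]
    have : cross (sigma (none : Option K)) k = 0 := by
      simp [sigma, cross, h2]
    rw [this, map_zero, zero_mul]
  · refine Finset.mem_image.2 ⟨some (k.1 / k.2), Finset.mem_univ _, ?_⟩
    rw [pt_eq_iff (combo_ne_zero φ huv (sigma_ne_zero _)) (combo_ne_zero φ huv hk),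
      cross_combo]
    have : cross (sigma (some (k.1 / k.2))) k = 0 := by
      simp only [sigma, cross, Option.elim]
      field_simp
      ring
    rw [this, map_zero, zero_mul]

lemma card_block {u v : F × F} (huv : cross u v ≠ 0) :
    (block φ u v).card = Fintype.card K + 1 := by
  rw [block, Finset.card_image_of_injective _ ?_, Finset.card_univ, Fintype.card_option]
  intro o o' h
  rw [pt_eq_iff (combo_ne_zero φ huv (sigma_ne_zero _)) (combo_ne_zero φ huv (sigma_ne_zero _)),
    cross_combo, mul_eq_zero] at h
  rcases h with h | h
  · exact (cross_sigma_eq_zero_iff o o').1 ((_root_.map_eq_zero φ).1 h)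
  · exact absurd h huv

/-- a canonical nonzero representative of a point -/
def rep : Option F → F × F := fun P => P.elim (1, 0) (fun x => (x, 1))

lemma rep_ne_zero (P : Option F) : rep P ≠ 0 := by
  cases P <;> simp [rep, Prod.ext_iff]

lemma pt_rep (P : Option F) : pt (rep P) = P := by
  cases P <;> simp [rep, pt]

lemma cross_rep_ne_zero {P Q : Option F} (h : P ≠ Q) : cross (rep P) (rep Q) ≠ 0 := by
  intro hc
  exact h (by rw [← pt_rep P, ← pt_rep Q, pt_eq_iff (rep_ne_zero P) (rep_ne_zero Q), hc])

lemma exists_block_cover (P1 P2 P3 : Option F) (h12 : P1 ≠ P2) (h13 : P1 ≠ P3)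
    (h23 : P2 ≠ P3) :
    ∃ u v : F × F, cross u v ≠ 0 ∧ P1 ∈ block φ u v ∧ P2 ∈ block φ u v ∧ P3 ∈ block φ u v := by
  set x1 := rep P1; set x2 := rep P2; set x3 := rep P3
  have hc : cross x1 x2 ≠ 0 := cross_rep_ne_zero h12
  have ha : cross x3 x2 ≠ 0 := cross_rep_ne_zero h23.symm
  have hb : cross x1 x3 ≠ 0 := cross_rep_ne_zero h13
  refine ⟨cross x3 x2 • x1, cross x1 x3 • x2, ?_, ?_, ?_, ?_⟩
  · have : cross (cross x3 x2 • x1) (cross x1 x3 • x2) = cross x3 x2 * cross x1 x3 * cross x1 x2 := by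
      simp only [cross, Prod.smul_fst, Prod.smul_snd, smul_eq_mul]; ring
    rw [this]
    exact mul_ne_zero (mul_ne_zero ha hb) hc
  · have h10 : combo φ (cross x3 x2 • x1) (cross x1 x3 • x2) ((1:K),(0:K)) = cross x3 x2 • x1 := by
      simp [combo, Prod.ext_iff, Prod.smul_fst, Prod.smul_snd]
    have := mem_block_of φ (u := cross x3 x2 • x1) (v := cross x1 x3 • x2) ?_ (k := ((1:K),(0:K))) (by simp [Prod.ext_iff])
    · rw [h10, pt_smul ha (rep_ne_zero P1), pt_rep] at this
      exact this
    · have : cross (cross x3 x2 • x1) (cross x1 x3 • x2) = cross x3 x2 * cross x1 x3 * cross x1 x2 := by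
        simp only [cross, Prod.smul_fst, Prod.smul_snd, smul_eq_mul]; ring
      rw [this]; exact mul_ne_zero (mul_ne_zero ha hb) hc
  · have h01 : combo φ (cross x3 x2 • x1) (cross x1 x3 • x2) ((0:K),(1:K)) = cross x1 x3 • x2 := by
      simp [combo, Prod.ext_iff, Prod.smul_fst, Prod.smul_snd]
    have := mem_block_of φ (u := cross x3 x2 • x1) (v := cross x1 x3 • x2) ?_ (k := ((0:K),(1:K))) (by simp [Prod.ext_iff])
    · rw [h01, pt_smul hb (rep_ne_zero P2), pt_rep] at this
      exact this
    · have : cross (cross x3 x2 • x1) (cross x1 x3 • x2) = cross x3 x2 * cross x1 x3 * cross x1 x2 := by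
        simp only [cross, Prod.smul_fst, Prod.smul_snd, smul_eq_mul]; ring
      rw [this]; exact mul_ne_zero (mul_ne_zero ha hb) hc
  · have h11 : combo φ (cross x3 x2 • x1) (cross x1 x3 • x2) ((1:K),(1:K)) = cross x1 x2 • x3 := by
      rw [cramer x1 x2 x3]
      simp [combo, Prod.ext_iff, Prod.smul_fst, Prod.smul_snd]
    have := mem_block_of φ (u := cross x3 x2 • x1) (v := cross x1 x3 • x2) ?_ (k := ((1:K),(1:K))) (by simp [Prod.ext_iff])
    · rw [h11, pt_smul hc (rep_ne_zero P3), pt_rep] at this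
      exact this
    · have : cross (cross x3 x2 • x1) (cross x1 x3 • x2) = cross x3 x2 * cross x1 x3 * cross x1 x2 := by
        simp only [cross, Prod.smul_fst, Prod.smul_snd, smul_eq_mul]; ring
      rw [this]; exact mul_ne_zero (mul_ne_zero ha hb) hc

lemma combo_smul (u v : F × F) (s : K) (k : K × K) :
    combo φ u v (s • k) = φ s • combo φ u v k := by
  refine Prod.ext ?_ ?_ <;>
    simp only [combo, Prod.smul_fst, Prod.smul_snd, smul_eq_mul, map_mul] <;> ring

lemma combo_zero (u v : F × F) : combo φ u v 0 = 0 := by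
  simp [combo, Prod.ext_iff]

lemma coeff_unique {w1 w2 : F × F} (h : cross w1 w2 ≠ 0) {s t s' t' : F}
    (heq : s • w1 + t • w2 = s' • w1 + t' • w2) : s = s' ∧ t = t' := by
  have e1 : s * w1.1 + t * w2.1 = s' * w1.1 + t' * w2.1 := by
    have := congrArg Prod.fst heq
    simpa using this
  have e2 : s * w1.2 + t * w2.2 = s' * w1.2 + t' * w2.2 := by
    have := congrArg Prod.snd heq
    simpa using this
  have hs : (s - s') * cross w1 w2 = 0 := by
    simp only [cross]; linear_combination w2.2 * e1 - w2.1 * e2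
  have ht : (t - t') * cross w1 w2 = 0 := by
    simp only [cross]; linear_combination w1.1 * e2 - w1.2 * e1
  exact ⟨sub_eq_zero.1 ((mul_eq_zero.1 hs).resolve_right h),
    sub_eq_zero.1 ((mul_eq_zero.1 ht).resolve_right h)⟩

lemma block_eq_of_shared {u v u' v' : F × F} (huv : cross u v ≠ 0) (huv' : cross u' v' ≠ 0)
    {Q1 Q2 Q3 : Option F} (q12 : Q1 ≠ Q2) (q13 : Q1 ≠ Q3) (q23 : Q2 ≠ Q3)
    (m1 : Q1 ∈ block φ u v) (m2 : Q2 ∈ block φ u v) (m3 : Q3 ∈ block φ u v)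
    (m1' : Q1 ∈ block φ u' v') (m2' : Q2 ∈ block φ u' v') (m3' : Q3 ∈ block φ u' v') :
    block φ u v = block φ u' v' := by
  obtain ⟨o1, -, e1⟩ := Finset.mem_image.1 m1
  obtain ⟨o2, -, e2⟩ := Finset.mem_image.1 m2
  obtain ⟨o3, -, e3⟩ := Finset.mem_image.1 m3
  obtain ⟨p1, -, f1⟩ := Finset.mem_image.1 m1'
  obtain ⟨p2, -, f2⟩ := Finset.mem_image.1 m2'
  obtain ⟨p3, -, f3⟩ := Finset.mem_image.1 m3'
  set k1 := sigma o1 with hk1def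
  set k2 := sigma o2 with hk2def
  set k3 := sigma o3 with hk3def
  set l1 := sigma p1 with hl1def
  set l2 := sigma p2 with hl2def
  set l3 := sigma p3 with hl3def
  set w1 := combo φ u v k1 with hw1def
  set w2 := combo φ u v k2 with hw2def
  set w3 := combo φ u v k3 with hw3def
  set z1 := combo φ u' v' l1 with hz1def
  set z2 := combo φ u' v' l2 with hz2def
  set z3 := combo φ u' v' l3 with hz3def
  have hw1 : w1 ≠ 0 := combo_ne_zero φ huv (sigma_ne_zero o1)
  have hw2 : w2 ≠ 0 := combo_ne_zero φ huv (sigma_ne_zero o2)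
  have hw3 : w3 ≠ 0 := combo_ne_zero φ huv (sigma_ne_zero o3)
  have hz1 : z1 ≠ 0 := combo_ne_zero φ huv' (sigma_ne_zero p1)
  have hz2 : z2 ≠ 0 := combo_ne_zero φ huv' (sigma_ne_zero p2)
  have hz3 : z3 ≠ 0 := combo_ne_zero φ huv' (sigma_ne_zero p3)
  -- nonvanishing of the K-crosses
  have kcross : ∀ (uu vv : F × F), cross uu vv ≠ 0 → ∀ (ka kb : K × K), ka ≠ 0 → kb ≠ 0 →
      pt (combo φ uu vv ka) ≠ pt (combo φ uu vv kb) → cross ka kb ≠ 0 := by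
    intro uu vv huuvv ka kb hka hkb hne hc
    exact hne (by
      rw [pt_eq_iff (combo_ne_zero φ huuvv hka) (combo_ne_zero φ huuvv hkb),
        cross_combo, hc, map_zero, zero_mul])
  have hc0 : cross k1 k2 ≠ 0 := kcross u v huv k1 k2 (sigma_ne_zero o1) (sigma_ne_zero o2)
    (by rw [e1, e2]; exact q12)
  have ha : cross k3 k2 ≠ 0 := kcross u v huv k3 k2 (sigma_ne_zero o3) (sigma_ne_zero o2)
    (by rw [e3, e2]; exact q23.symm)
  have hb : cross k1 k3 ≠ 0 := kcross u v huv k1 k3 (sigma_ne_zero o1) (sigma_ne_zero o3)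
    (by rw [e1, e3]; exact q13)
  have hc0' : cross l1 l2 ≠ 0 := kcross u' v' huv' l1 l2 (sigma_ne_zero p1) (sigma_ne_zero p2)
    (by rw [f1, f2]; exact q12)
  have ha' : cross l3 l2 ≠ 0 := kcross u' v' huv' l3 l2 (sigma_ne_zero p3) (sigma_ne_zero p2)
    (by rw [f3, f2]; exact q23.symm)
  have hb' : cross l1 l3 ≠ 0 := kcross u' v' huv' l1 l3 (sigma_ne_zero p1) (sigma_ne_zero p3)
    (by rw [f1, f3]; exact q13)
  -- proportionality factors between the two representations of shared points
  obtain ⟨c1, hc1⟩ := exists_smul_of_cross_eq_zero hw1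
    ((pt_eq_iff hw1 hz1).1 (e1.trans f1.symm))
  obtain ⟨c2, hc2⟩ := exists_smul_of_cross_eq_zero hw2
    ((pt_eq_iff hw2 hz2).1 (e2.trans f2.symm))
  obtain ⟨c3, hc3⟩ := exists_smul_of_cross_eq_zero hw3
    ((pt_eq_iff hw3 hz3).1 (e3.trans f3.symm))
  have hc1ne : c1 ≠ 0 := by intro h; rw [h, zero_smul] at hc1; exact hz1 hc1
  have hc2ne : c2 ≠ 0 := by intro h; rw [h, zero_smul] at hc2; exact hz2 hc2
  have hc3ne : c3 ≠ 0 := by intro h; rw [h, zero_smul] at hc3; exact hz3 hc3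
  -- Cramer expansion of the third point in terms of the first two
  have hw3eq : φ (cross k1 k2) • w3 = φ (cross k3 k2) • w1 + φ (cross k1 k3) • w2 := by
    rw [hw1def, hw2def, hw3def, ← combo_smul_add, ← cramer k1 k2 k3, combo_smul]
  have hz3eq : φ (cross l1 l2) • z3 = φ (cross l3 l2) • z1 + φ (cross l1 l3) • z2 := by
    rw [hz1def, hz2def, hz3def, ← combo_smul_add, ← cramer l1 l2 l3, combo_smul]
  rw [hc1, hc2, hc3] at hz3eq
  have A1 : φ (cross k1 k2) * w3.1 = φ (cross k3 k2) * w1.1 + φ (cross k1 k3) * w2.1 := by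
    have := congrArg Prod.fst hw3eq; simpa using this
  have A2 : φ (cross k1 k2) * w3.2 = φ (cross k3 k2) * w1.2 + φ (cross k1 k3) * w2.2 := by
    have := congrArg Prod.snd hw3eq; simpa using this
  have B1 : φ (cross l1 l2) * (c3 * w3.1)
      = φ (cross l3 l2) * (c1 * w1.1) + φ (cross l1 l3) * (c2 * w2.1) := by
    have := congrArg Prod.fst hz3eq; simpa [mul_assoc] using this
  have B2 : φ (cross l1 l2) * (c3 * w3.2)
      = φ (cross l3 l2) * (c1 * w1.2) + φ (cross l1 l3) * (c2 * w2.2) := by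
    have := congrArg Prod.snd hz3eq; simpa [mul_assoc] using this
  have hw12 : cross w1 w2 ≠ 0 := by
    rw [hw1def, hw2def, cross_combo]
    exact mul_ne_zero (fun h => hc0 ((_root_.map_eq_zero φ).1 h)) huv
  have veq : (φ (cross l1 l2) * c3 * φ (cross k3 k2)) • w1
        + (φ (cross l1 l2) * c3 * φ (cross k1 k3)) • w2
      = (φ (cross k1 k2) * (φ (cross l3 l2) * c1)) • w1
        + (φ (cross k1 k2) * (φ (cross l1 l3) * c2)) • w2 := by
    refine Prod.ext ?_ ?_ <;>
      simp only [Prod.fst_add, Prod.snd_add, Prod.smul_fst, Prod.smul_snd, smul_eq_mul]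
    · linear_combination φ (cross k1 k2) * B1 - (φ (cross l1 l2) * c3) * A1
    · linear_combination φ (cross k1 k2) * B2 - (φ (cross l1 l2) * c3) * A2
  obtain ⟨E1, E2⟩ := coeff_unique hw12 veq
  -- now prove the inclusion
  refine Finset.eq_of_subset_of_card_le ?_
    (le_of_eq ((card_block φ huv').trans (card_block φ huv).symm))
  intro P hP
  obtain ⟨o, -, eo⟩ := Finset.mem_image.1 hP
  set k := sigma o with hkdef
  set X := combo φ u v k with hXdef
  have hXeq : φ (cross k1 k2) • X = φ (cross k k2) • w1 + φ (cross k1 k) • w2 := by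
    rw [hXdef, hw1def, hw2def, ← combo_smul_add, ← cramer k1 k2 k, combo_smul]
  have hX1 : φ (cross k1 k2) * X.1 = φ (cross k k2) * w1.1 + φ (cross k1 k) * w2.1 := by
    have := congrArg Prod.fst hXeq; simpa using this
  have hX2 : φ (cross k1 k2) * X.2 = φ (cross k k2) * w1.2 + φ (cross k1 k) * w2.2 := by
    have := congrArg Prod.snd hXeq; simpa using this
  set g : K × K := (cross k k2 * (cross l3 l2 * cross k1 k3)) • l1
    + (cross k1 k * (cross l1 l3 * cross k3 k2)) • l2 with hgdef
  set Y := combo φ u' v' g with hYdef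
  have hYz : Y = (φ (cross k k2) * (φ (cross l3 l2) * φ (cross k1 k3))) • (c1 • w1)
      + (φ (cross k1 k) * (φ (cross l1 l3) * φ (cross k3 k2))) • (c2 • w2) := by
    rw [hYdef, hgdef, combo_smul_add, ← hz1def, ← hz2def, hc1, hc2, map_mul, map_mul,
      map_mul, map_mul]
  have hY1 : Y.1 = φ (cross k k2) * (φ (cross l3 l2) * φ (cross k1 k3)) * (c1 * w1.1)
      + φ (cross k1 k) * (φ (cross l1 l3) * φ (cross k3 k2)) * (c2 * w2.1) := by
    have := congrArg Prod.fst hYz; simpa [mul_assoc] using this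
  have hY2 : Y.2 = φ (cross k k2) * (φ (cross l3 l2) * φ (cross k1 k3)) * (c1 * w1.2)
      + φ (cross k1 k) * (φ (cross l1 l3) * φ (cross k3 k2)) * (c2 * w2.2) := by
    have := congrArg Prod.snd hYz; simpa [mul_assoc] using this
  set μ : F := φ (cross k3 k2) * φ (cross k1 k3) * φ (cross l1 l2) * c3 with hμdef
  have hμne : μ ≠ 0 := by
    rw [hμdef]
    exact mul_ne_zero (mul_ne_zero (mul_ne_zero
      (fun h => ha ((_root_.map_eq_zero φ).1 h)) (fun h => hb ((_root_.map_eq_zero φ).1 h)))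
      (fun h => hc0' ((_root_.map_eq_zero φ).1 h))) hc3ne
  have hc0F : φ (cross k1 k2) ≠ 0 := fun h => hc0 ((_root_.map_eq_zero φ).1 h)
  have hYX : φ (cross k1 k2) • Y = φ (cross k1 k2) • (μ • X) := by
    refine Prod.ext ?_ ?_ <;>
      simp only [Prod.smul_fst, Prod.smul_snd, smul_eq_mul, hμdef]
    · linear_combination (φ (cross k1 k2)) * hY1
        - (φ (cross k3 k2) * φ (cross k1 k3) * φ (cross l1 l2) * c3) * hX1
        - (φ (cross k k2) * φ (cross k1 k3) * w1.1) * E1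
        - (φ (cross k1 k) * φ (cross k3 k2) * w2.1) * E2
    · linear_combination (φ (cross k1 k2)) * hY2
        - (φ (cross k3 k2) * φ (cross k1 k3) * φ (cross l1 l2) * c3) * hX2
        - (φ (cross k k2) * φ (cross k1 k3) * w1.2) * E1
        - (φ (cross k1 k) * φ (cross k3 k2) * w2.2) * E2
  have hYX' : Y = μ • X := smul_right_injective (F × F) hc0F hYX
  have hXne : X ≠ 0 := combo_ne_zero φ huv (sigma_ne_zero o)
  have hYne : Y ≠ 0 := by rw [hYX']; exact smul_ne_zero hμne hXne
  have hgne : g ≠ 0 := by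
    intro h
    rw [hYdef, h, combo_zero] at hYne
    exact hYne rfl
  have hmem : pt Y ∈ block φ u' v' := by rw [hYdef]; exact mem_block_of φ huv' hgne
  rw [hYX', pt_smul hμne hXne] at hmem
  rw [← eo]
  exact hmem

include φ in
theorem exists_packing (q : ℕ) [Fintype F] (hK : Fintype.card K = q)
    (hF : Fintype.card F = q ^ 2) :
    ∃ Bs : Finset (Finset (Fin (q ^ 2 + 1))),
      (∀ b ∈ Bs, b.card = q + 1) ∧
      (∀ b ∈ Bs, ∀ b' ∈ Bs, b ≠ b' → (b ∩ b').card ≤ 2) ∧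
      (∀ T : Finset (Fin (q ^ 2 + 1)), T.card = 3 → ∃ b ∈ Bs, T ⊆ b) := by
  classical
  have hcard : Fintype.card (Option F) = q ^ 2 + 1 := by simp [hF]
  obtain e := Fintype.equivFinOfCardEq hcard
  refine ⟨Finset.image (fun p : (F × F) × (F × F) => (block φ p.1 p.2).image e)
    (Finset.univ.filter fun p : (F × F) × (F × F) => cross p.1 p.2 ≠ 0), ?_, ?_, ?_⟩
  · intro b hb
    obtain ⟨p, hp, rfl⟩ := Finset.mem_image.1 hb
    have hpc : cross p.1 p.2 ≠ 0 := (Finset.mem_filter.1 hp).2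
    rw [Finset.card_image_of_injective _ e.injective, card_block φ hpc, hK]
  · intro b hb b' hb' hne
    obtain ⟨p, hp, rfl⟩ := Finset.mem_image.1 hb
    obtain ⟨p', hp', rfl⟩ := Finset.mem_image.1 hb'
    have hpc : cross p.1 p.2 ≠ 0 := (Finset.mem_filter.1 hp).2
    have hpc' : cross p'.1 p'.2 ≠ 0 := (Finset.mem_filter.1 hp').2
    by_contra hcon
    push_neg at hcon
    have h3 : 3 ≤ ((block φ p.1 p.2).image e ∩ (block φ p'.1 p'.2).image e).card := hcon
    obtain ⟨T, hT, hTc⟩ := Finset.exists_subset_card_eq h3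
    obtain ⟨x, y, z, hxy, hxz, hyz, rfl⟩ := Finset.card_eq_three.1 hTc
    have hmem : ∀ w ∈ ({x, y, z} : Finset (Fin (q ^ 2 + 1))),
        e.symm w ∈ block φ p.1 p.2 ∧ e.symm w ∈ block φ p'.1 p'.2 := by
      intro w hw
      have := hT hw
      rw [Finset.mem_inter, Finset.mem_image, Finset.mem_image] at this
      obtain ⟨⟨a, ha, rfl⟩, ⟨a', ha', ha'e⟩⟩ := this
      constructor
      · simpa using ha
      · have : a' = e.symm (e a) := by simp [← ha'e]
        rwa [← this]
    have h1 := hmem x (by simp)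
    have h2 := hmem y (by simp)
    have h3' := hmem z (by simp)
    have exy : e.symm x ≠ e.symm y := fun h => hxy (e.symm.injective h)
    have exz : e.symm x ≠ e.symm z := fun h => hxz (e.symm.injective h)
    have eyz : e.symm y ≠ e.symm z := fun h => hyz (e.symm.injective h)
    exact hne (congrArg (Finset.image e)
      (block_eq_of_shared φ hpc hpc' exy exz eyz h1.1 h2.1 h3'.1 h1.2 h2.2 h3'.2))
  · intro T hT
    obtain ⟨x, y, z, hxy, hxz, hyz, rfl⟩ := Finset.card_eq_three.1 hT
    obtain ⟨u, v, huv, m1, m2, m3⟩ := exists_block_cover φ (e.symm x) (e.symm y) (e.symm z)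
      (fun h => hxy (e.symm.injective h)) (fun h => hxz (e.symm.injective h))
      (fun h => hyz (e.symm.injective h))
    refine ⟨(block φ u v).image e, Finset.mem_image.2 ⟨(u, v), Finset.mem_filter.2
      ⟨Finset.mem_univ _, huv⟩, rfl⟩, ?_⟩
    intro w hw
    simp only [Finset.mem_insert, Finset.mem_singleton] at hw
    rcases hw with rfl | rfl | rfl
    · exact Finset.mem_image.2 ⟨e.symm w, m1, by simp⟩
    · exact Finset.mem_image.2 ⟨e.symm w, m2, by simp⟩
    · exact Finset.mem_image.2 ⟨e.symm w, m3, by simp⟩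


end Geometry

theorem exists_packing_pow (r : ℕ) :
    ∃ Bs : Finset (Finset (Fin ((3 ^ 2 ^ r) ^ 2 + 1))),
      (∀ b ∈ Bs, b.card = 3 ^ 2 ^ r + 1) ∧
      (∀ b ∈ Bs, ∀ b' ∈ Bs, b ≠ b' → (b ∩ b').card ≤ 2) ∧
      (∀ T : Finset (Fin ((3 ^ 2 ^ r) ^ 2 + 1)), T.card = 3 → ∃ b ∈ Bs, T ⊆ b) := by
  haveI : Fact (Nat.Prime 3) := ⟨by norm_num⟩
  set K := GaloisField 3 (2 ^ r) with hKdef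
  haveI : Fintype K := Fintype.ofFinite K
  have hK : Fintype.card K = 3 ^ 2 ^ r := by
    rw [← Nat.card_eq_fintype_card]
    exact GaloisField.card 3 (2 ^ r) (by positivity)
  have hchar : ringChar K ≠ 2 := by
    have : CharP K 3 := inferInstance
    rw [ringChar.eq K 3]
    norm_num
  obtain ⟨d, hd⟩ := FiniteField.exists_nonsquare hchar
  have hirr : Irreducible (X ^ 2 - C d) := by
    rw [X_pow_sub_C_irreducible_iff_of_prime Nat.prime_two]
    intro b hb
    exact hd ⟨b, by rw [← hb]; ring⟩
  haveI : Fact (Irreducible (X ^ 2 - C d)) := ⟨hirr⟩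
  set F := AdjoinRoot (X ^ 2 - C d) with hFdef
  have hfne : (X ^ 2 - C d : K[X]) ≠ 0 := hirr.ne_zero
  haveI : DecidableEq F := Classical.decEq F
  haveI : Module.Finite K F := by
    have pb := AdjoinRoot.powerBasis hfne
    exact Module.Finite.of_basis pb.basis
  haveI : Finite F := Module.finite_of_finite K
  haveI : Fintype F := Fintype.ofFinite F
  have hrank : Module.finrank K F = 2 := by
    rw [(AdjoinRoot.powerBasis hfne).finrank, AdjoinRoot.powerBasis_dim]
    compute_degree!
  have hF : Fintype.card F = (3 ^ 2 ^ r) ^ 2 := by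
    rw [Module.card_eq_pow_finrank (K := K) (V := F), hrank, hK]
  exact exists_packing (algebraMap K F) (3 ^ 2 ^ r) hK hF

theorem exists_big_family (r : ℕ) :
    ∃ G : Finset (Finset (Fin (3 ^ 2 ^ r + 1))),
      (∀ A ∈ G, 4 ≤ A.card) ∧
      (∀ A ∈ G, ∀ B ∈ G, A ≠ B → (A ∩ B).card ≤ 2 ∨ A ⊆ B ∨ B ⊆ A) ∧
      (((3 ^ 2 ^ r + 1).choose 3 : ℝ) *
        ∑ i ∈ Finset.range (r + 1), 1 / (((3 ^ 2 ^ i + 1).choose 3 : ℕ) : ℝ)) ≤ G.card := by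
  induction r with
  | zero =>
    refine ⟨{Finset.univ}, ?_, ?_, ?_⟩
    · intro A hA
      rw [Finset.mem_singleton.1 hA]
      simp
    · intro A hA B hB hne
      rw [Finset.mem_singleton.1 hA, Finset.mem_singleton.1 hB] at hne
      exact absurd rfl hne
    · norm_num
  | succ r ih =>
    obtain ⟨G₀, hG₀4, hG₀lam, hG₀count⟩ := ih
    obtain ⟨Bs, hBcard, hBint, hBcover⟩ := exists_packing_pow r
    have hq : (3:ℕ) ^ 2 ^ (r + 1) = (3 ^ 2 ^ r) ^ 2 := by
      rw [pow_succ, pow_mul]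
    rw [hq]
    have hq3 : 3 ≤ 3 ^ 2 ^ r := by
      calc 3 = 3 ^ 1 := (pow_one 3).symm
      _ ≤ 3 ^ 2 ^ r := Nat.pow_le_pow_right (by norm_num) (Nat.one_le_two_pow)
    classical
    set img : {b // b ∈ Bs} → Finset (Finset (Fin ((3 ^ 2 ^ r) ^ 2 + 1))) :=
      fun b => G₀.image
        (fun A => A.map (b.1.orderEmbOfFin (hBcard b.1 b.2)).toEmbedding) with himgdef
    have himgsub : ∀ (b : {b // b ∈ Bs}), ∀ C ∈ img b, C ⊆ b.1 := by
      intro b C hC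
      obtain ⟨A₀, -, rfl⟩ := Finset.mem_image.1 hC
      intro x hx
      obtain ⟨i, -, rfl⟩ := Finset.mem_map.1 hx
      exact Finset.orderEmbOfFin_mem b.1 (hBcard b.1 b.2) i
    have himgcard : ∀ (b : {b // b ∈ Bs}), ∀ C ∈ img b, 4 ≤ C.card := by
      intro b C hC
      obtain ⟨A₀, hA₀, rfl⟩ := Finset.mem_image.1 hC
      rw [Finset.card_map]
      exact hG₀4 A₀ hA₀
    refine ⟨insert Finset.univ (Bs.attach.biUnion img), ?_, ?_, ?_⟩
    · intro A hA
      rcases Finset.mem_insert.1 hA with rfl | hA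
      · rw [Finset.card_univ, Fintype.card_fin]
        nlinarith [hq3]
      · obtain ⟨b, -, hmem⟩ := Finset.mem_biUnion.1 hA
        exact himgcard b A hmem
    · intro A hA B hB hne
      rcases Finset.mem_insert.1 hA with rfl | hA
      · exact Or.inr (Or.inr (Finset.subset_univ B))
      rcases Finset.mem_insert.1 hB with rfl | hB
      · exact Or.inr (Or.inl (Finset.subset_univ A))
      obtain ⟨b, -, hmemA⟩ := Finset.mem_biUnion.1 hA
      obtain ⟨b', -, hmemB⟩ := Finset.mem_biUnion.1 hB
      by_cases hbb : b = b'
      · subst hbb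
        obtain ⟨A₀, hA₀, rfl⟩ := Finset.mem_image.1 hmemA
        obtain ⟨B₀, hB₀, rfl⟩ := Finset.mem_image.1 hmemB
        have hne₀ : A₀ ≠ B₀ := by
          intro h; exact hne (by rw [h])
        rcases hG₀lam A₀ hA₀ B₀ hB₀ hne₀ with h | h | h
        · left
          rw [← Finset.map_inter, Finset.card_map]
          exact h
        · exact Or.inr (Or.inl (Finset.map_subset_map.2 h))
        · exact Or.inr (Or.inr (Finset.map_subset_map.2 h))
      · left
        have hsub : A ∩ B ⊆ b.1 ∩ b'.1 :=
          Finset.inter_subset_inter (himgsub b A hmemA) (himgsub b' B hmemB)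
        calc (A ∩ B).card ≤ (b.1 ∩ b'.1).card := Finset.card_le_card hsub
        _ ≤ 2 := hBint b.1 b.2 b'.1 b'.2 (fun h => hbb (Subtype.ext h))
    · -- counting
      have hnotmem : (Finset.univ : Finset (Fin ((3 ^ 2 ^ r) ^ 2 + 1))) ∉ Bs.attach.biUnion img := by
        intro h
        obtain ⟨b, -, hmem⟩ := Finset.mem_biUnion.1 h
        have h1 : (Finset.univ : Finset (Fin ((3 ^ 2 ^ r) ^ 2 + 1))).card ≤ b.1.card :=
          Finset.card_le_card (himgsub b _ hmem)
        rw [Finset.card_univ, Fintype.card_fin, hBcard b.1 b.2] at h1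
        nlinarith [hq3]
      have hdisj : ∀ b ∈ Bs.attach, ∀ b' ∈ Bs.attach, b ≠ b' → Disjoint (img b) (img b') := by
        rintro b - b' - hbb
        rw [Finset.disjoint_left]
        intro C hC hC'
        have h4 : 4 ≤ C.card := himgcard b C hC
        have hsub : C ⊆ b.1 ∩ b'.1 :=
          Finset.subset_inter (himgsub b C hC) (himgsub b' C hC')
        have := Finset.card_le_card hsub
        have h2 := hBint b.1 b.2 b'.1 b'.2 (fun h => hbb (Subtype.ext h))
        omega
      have himgc : ∀ (b : {b // b ∈ Bs}), (img b).card = G₀.card := by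
        intro b
        rw [himgdef]
        exact Finset.card_image_of_injective _ (Finset.map_injective _)
      have hcard : (insert Finset.univ (Bs.attach.biUnion img)).card
          = 1 + Bs.card * G₀.card := by
        rw [Finset.card_insert_of_notMem hnotmem, Finset.card_biUnion hdisj]
        rw [Finset.sum_congr rfl (fun b _ => himgc b), Finset.sum_const, Finset.card_attach,
          smul_eq_mul]
        omega
      rw [hcard]
      -- the covering estimate
      have hcover : (((3 ^ 2 ^ r) ^ 2 + 1).choose 3) ≤ Bs.card * ((3 ^ 2 ^ r + 1).choose 3) := by
        have hsub : Finset.powersetCard 3 (Finset.univ : Finset (Fin ((3 ^ 2 ^ r) ^ 2 + 1)))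
            ⊆ Bs.biUnion (fun b => Finset.powersetCard 3 b) := by
          intro T hT
          have hT3 : T.card = 3 := (Finset.mem_powersetCard.1 hT).2
          obtain ⟨b, hb, hTb⟩ := hBcover T hT3
          exact Finset.mem_biUnion.2 ⟨b, hb, Finset.mem_powersetCard.2 ⟨hTb, hT3⟩⟩
        have h1 := Finset.card_le_card hsub
        have h2 := Finset.card_biUnion_le (s := Bs) (t := fun b => Finset.powersetCard 3 b)
        rw [Finset.card_powersetCard, Finset.card_univ, Fintype.card_fin] at h1
        have h3 : ∑ b ∈ Bs, (Finset.powersetCard 3 b).card = Bs.card * ((3 ^ 2 ^ r + 1).choose 3) := by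
          rw [Finset.sum_congr rfl (fun b hb => by
            rw [Finset.card_powersetCard, hBcard b hb]), Finset.sum_const, smul_eq_mul]
        omega
      rw [Finset.sum_range_succ, hq]
      have hS0 : (0:ℝ) ≤ ∑ i ∈ Finset.range (r + 1), 1 / (((3 ^ 2 ^ i + 1).choose 3 : ℕ) : ℝ) := by
        apply Finset.sum_nonneg
        intro i _
        positivity
      have hc3pos : (0:ℝ) < (((3 ^ 2 ^ r) ^ 2 + 1).choose 3 : ℕ) := by
        have : 0 < ((3 ^ 2 ^ r) ^ 2 + 1).choose 3 := Nat.choose_pos (by nlinarith [hq3])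
        exact_mod_cast this
      have hkey : ((((3 ^ 2 ^ r) ^ 2 + 1).choose 3 : ℕ) : ℝ) *
          (∑ i ∈ Finset.range (r + 1), 1 / (((3 ^ 2 ^ i + 1).choose 3 : ℕ) : ℝ))
          ≤ (Bs.card : ℝ) * (G₀.card : ℝ) := by
        calc ((((3 ^ 2 ^ r) ^ 2 + 1).choose 3 : ℕ) : ℝ) * _
            ≤ ((Bs.card * ((3 ^ 2 ^ r + 1).choose 3) : ℕ) : ℝ) *
              (∑ i ∈ Finset.range (r + 1), 1 / (((3 ^ 2 ^ i + 1).choose 3 : ℕ) : ℝ)) := by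
              apply mul_le_mul_of_nonneg_right _ hS0
              exact_mod_cast hcover
        _ = (Bs.card : ℝ) * ((((3 ^ 2 ^ r + 1).choose 3 : ℕ) : ℝ) *
              (∑ i ∈ Finset.range (r + 1), 1 / (((3 ^ 2 ^ i + 1).choose 3 : ℕ) : ℝ))) := by
              push_cast; ring
        _ ≤ (Bs.card : ℝ) * (G₀.card : ℝ) := by
              apply mul_le_mul_of_nonneg_left hG₀count (by positivity)
      push_cast
      rw [mul_add]
      have hlast : ((((3 ^ 2 ^ r) ^ 2 + 1).choose 3 : ℕ) : ℝ) * (1 / ((((3 ^ 2 ^ r) ^ 2 + 1).choose 3 : ℕ) : ℝ)) = 1 := by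
        field_simp
      push_cast at hlast hkey ⊢
      linarith


end ThreeLaminar

theorem exists_large_three_laminar (r n : ℕ) (hn : n = 3 ^ (2 ^ r) + 1) :
    ∃ F : Finset (Finset (Fin n)),
      (∀ A ∈ F, ∀ B ∈ F, 3 ≤ (A ∩ B).card → A ⊆ B ∨ B ⊆ A) ∧
      1 + (n.choose 1 : ℝ) + (n.choose 2 : ℝ) +
          (n.choose 3 : ℝ) *
            (1 + ∑ i ∈ Finset.range (r + 1),
              1 / (((3 ^ (2 ^ i) + 1).choose 3 : ℕ) : ℝ)) ≤
        (F.card : ℝ) := by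
  subst hn
  classical
  obtain ⟨G, hG4, hGlam, hGcount⟩ := ThreeLaminar.exists_big_family r
  set S : Finset (Finset (Fin (3 ^ 2 ^ r + 1))) :=
    (Finset.range 4).biUnion
      (fun k => Finset.powersetCard k (Finset.univ : Finset (Fin (3 ^ 2 ^ r + 1)))) with hSdef
  have hSmem : ∀ A : Finset (Fin (3 ^ 2 ^ r + 1)), A ∈ S ↔ A.card ≤ 3 := by
    intro A
    rw [hSdef]
    simp only [Finset.mem_biUnion, Finset.mem_range, Finset.mem_powersetCard]
    constructor
    · rintro ⟨k, hk, -, rfl⟩; omega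
    · intro h; exact ⟨A.card, by omega, Finset.subset_univ A, rfl⟩
  have hdisjSG : Disjoint S G := by
    rw [Finset.disjoint_left]
    intro A hA hA'
    have h1 := (hSmem A).1 hA
    have h2 := hG4 A hA'
    omega
  refine ⟨S ∪ G, ?_, ?_⟩
  · intro A hA B hB hcard
    have hsmall : ∀ C D : Finset (Fin (3 ^ 2 ^ r + 1)), C.card ≤ 3 → 3 ≤ (C ∩ D).card → C ⊆ D := by
      intro C D hC h3
      have hsub : C ∩ D ⊆ C := Finset.inter_subset_left
      have := Finset.card_le_card hsub
      have heq : C ∩ D = C := Finset.eq_of_subset_of_card_le hsub (by omega)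
      rw [← heq]
      exact Finset.inter_subset_right
    rcases Finset.mem_union.1 hA with hA' | hA'
    · exact Or.inl (hsmall A B ((hSmem A).1 hA') hcard)
    rcases Finset.mem_union.1 hB with hB' | hB'
    · refine Or.inr (hsmall B A ((hSmem B).1 hB') ?_)
      rwa [Finset.inter_comm]
    by_cases hAB : A = B
    · exact Or.inl (by rw [hAB])
    rcases hGlam A hA' B hB' hAB with h | h | h
    · omega
    · exact Or.inl h
    · exact Or.inr h
  · have hScard : S.card = (3 ^ 2 ^ r + 1).choose 0 + (3 ^ 2 ^ r + 1).choose 1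
        + (3 ^ 2 ^ r + 1).choose 2 + (3 ^ 2 ^ r + 1).choose 3 := by
      rw [hSdef, Finset.card_biUnion]
      · have : ∀ k, (Finset.powersetCard k (Finset.univ : Finset (Fin (3 ^ 2 ^ r + 1)))).card
            = (3 ^ 2 ^ r + 1).choose k := by
          intro k
          rw [Finset.card_powersetCard, Finset.card_univ, Fintype.card_fin]
        rw [Finset.sum_range_succ, Finset.sum_range_succ, Finset.sum_range_succ,
          Finset.sum_range_succ, Finset.sum_range_zero, this, this, this, this]
        omega
      · intro k hk k' hk' hkk
        rw [Function.onFun, Finset.disjoint_left]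
        intro A hA hA'
        have h1 := (Finset.mem_powersetCard.1 hA).2
        have h2 := (Finset.mem_powersetCard.1 hA').2
        exact hkk (by omega)
    have hucard : (S ∪ G).card = S.card + G.card :=
      Finset.card_union_of_disjoint hdisjSG
    rw [hucard, hScard]
    have h0 : (3 ^ 2 ^ r + 1).choose 0 = 1 := Nat.choose_zero_right _
    push_cast [h0]
    rw [mul_add, mul_one]
    push_cast at hGcount
    linarith
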